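/- Let a ≥ b > 0 and set k = a/√(a² + b²). Then ∫₀^a p²/√(a²b² + (a² − b²)p² − p⁴) dp = √(a² + b²)·E(k) − (b²/√(a² + b²))·K(k), where K(k) = ∫₀^{π/2} dθ/√(1 − k² sin²θ) and E(k) = ∫₀^{π/2} √(1 − k² sin²θ) dθ are the complete elliptic integrals of the first and second kind. -/

import Mathlib

open Real

/-- Complete elliptic integral of the first kind. -/
noncomputable def ellipticK (k : ℝ) : ℝ :=
  ∫ θ in (0:ℝ)..(π / 2), 1 / Real.sqrt (1 - k ^ 2 * Real.sin θ ^ 2)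

/-- Complete elliptic integral of the second kind. -/
noncomputable def ellipticE (k : ℝ) : ℝ :=
  ∫ θ in (0:ℝ)..(π / 2), Real.sqrt (1 - k ^ 2 * Real.sin θ ^ 2)

/-- Maclaurin's limit hyperbolic excess expressed through complete elliptic
integrals of the first and second kind, with modulus `k = a/√(a² + b²)`. -/
theorem maclaurin_excess_elliptic (a b : ℝ) (hb : 0 < b) (hab : b ≤ a)
    (k : ℝ) (hk : k = a / Real.sqrt (a ^ 2 + b ^ 2)) :
    ∫ p in (0:ℝ)..a,
        p ^ 2 / Real.sqrt (a ^ 2 * b ^ 2 + (a ^ 2 - b ^ 2) * p ^ 2 - p ^ 4)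
      = Real.sqrt (a ^ 2 + b ^ 2) * ellipticE k
        - b ^ 2 / Real.sqrt (a ^ 2 + b ^ 2) * ellipticK k := by
  have ha : 0 < a := lt_of_lt_of_le hb hab
  set c := Real.sqrt (a ^ 2 + b ^ 2) with hc_def
  have hc : 0 < c := Real.sqrt_pos.mpr (by positivity)
  have hc2 : c ^ 2 = a ^ 2 + b ^ 2 := Real.sq_sqrt (by positivity)
  -- key positivity: for all θ, b² + a² cos²θ = c² (1 - k² sin²θ)
  have hkc : k = a / c := hk
  have hD : ∀ θ : ℝ, b ^ 2 + a ^ 2 * Real.cos θ ^ 2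
      = c ^ 2 * (1 - k ^ 2 * Real.sin θ ^ 2) := by
    intro θ
    have hs := Real.sin_sq_add_cos_sq θ
    rw [hkc]
    field_simp
    nlinarith [hs]
  have hSpos : ∀ θ : ℝ, 0 < 1 - k ^ 2 * Real.sin θ ^ 2 := by
    intro θ
    have h1 := hD θ
    nlinarith [sq_nonneg (a * Real.cos θ), hb, sq_nonneg b, hc]
  -- the integrand on the p-side
  set f : ℝ → ℝ := fun p =>
    p ^ 2 / Real.sqrt (a ^ 2 * b ^ 2 + (a ^ 2 - b ^ 2) * p ^ 2 - p ^ 4) with hf_def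
  -- the intermediate θ-side integrand
  set g : ℝ → ℝ := fun θ =>
    a ^ 2 * Real.sin θ ^ 2 / Real.sqrt (b ^ 2 + a ^ 2 * Real.sin θ ^ 2) with hg_def
  -- Step 1: substitution p = a sin θ
  have himg : (fun θ : ℝ => a * Real.sin θ) '' Set.Ioo 0 (π / 2) = Set.Ioo 0 a := by
    ext p
    constructor
    · rintro ⟨θ, ⟨h1, h2⟩, rfl⟩
      have hπ : (π : ℝ) / 2 < π := by linarith [Real.pi_pos]
      have hs1 : 0 < Real.sin θ := Real.sin_pos_of_pos_of_lt_pi h1 (h2.trans hπ)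
      have hs2 : Real.sin θ < 1 := by
        have := Real.strictMonoOn_sin
          ⟨by linarith [Real.pi_pos], h2.le⟩
          ⟨by linarith [Real.pi_pos], le_refl _⟩ h2
        simpa using this
      refine ⟨by positivity, ?_⟩
      show a * Real.sin θ < a
      nlinarith [mul_lt_mul_of_pos_left hs2 ha]
    · rintro ⟨h1, h2⟩
      refine ⟨Real.arcsin (p / a), ⟨?_, ?_⟩, ?_⟩
      · exact Real.arcsin_pos.mpr (by positivity)
      · exact Real.arcsin_lt_pi_div_two.mpr (by rw [div_lt_one ha]; exact h2)
      · show a * Real.sin (Real.arcsin (p / a)) = p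
        rw [Real.sin_arcsin (by nlinarith [div_pos h1 ha])
          (by rw [div_le_one ha]; exact h2.le)]
        field_simp
  have hinj : Set.InjOn (fun θ : ℝ => a * Real.sin θ) (Set.Ioo 0 (π / 2)) := by
    intro x hx y hy hxy
    have hx' : x ∈ Set.Icc (-(π / 2)) (π / 2) :=
      ⟨by linarith [hx.1, Real.pi_pos], hx.2.le⟩
    have hy' : y ∈ Set.Icc (-(π / 2)) (π / 2) :=
      ⟨by linarith [hy.1, Real.pi_pos], hy.2.le⟩
    exact Real.injOn_sin hx' hy' (mul_left_cancel₀ ha.ne' hxy)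
  have hderiv : ∀ x ∈ Set.Ioo (0:ℝ) (π / 2),
      HasDerivWithinAt (fun θ : ℝ => a * Real.sin θ) (a * Real.cos x)
        (Set.Ioo 0 (π / 2)) x :=
    fun x _ => ((Real.hasDerivAt_sin x).const_mul a).hasDerivWithinAt
  have key := MeasureTheory.integral_image_eq_integral_abs_deriv_smul
    measurableSet_Ioo hderiv hinj f
  rw [himg] at key
  have step1 : (∫ p in (0:ℝ)..a, f p) = ∫ θ in (0:ℝ)..(π / 2), g θ := by
    rw [intervalIntegral.integral_of_le ha.le,
      MeasureTheory.integral_Ioc_eq_integral_Ioo, key,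
      intervalIntegral.integral_of_le (by positivity : (0:ℝ) ≤ π / 2),
      MeasureTheory.integral_Ioc_eq_integral_Ioo]
    apply MeasureTheory.setIntegral_congr_fun measurableSet_Ioo
    intro θ hθ
    have hπ : θ ∈ Set.Ioo (-(π / 2)) (π / 2) :=
      ⟨by linarith [hθ.1, Real.pi_pos], hθ.2⟩
    have hcos : 0 < Real.cos θ := Real.cos_pos_of_mem_Ioo hπ
    have hsin : 0 < Real.sin θ := Real.sin_pos_of_pos_of_lt_pi hθ.1
      (hθ.2.trans (by linarith [Real.pi_pos]))
    have hrad : a ^ 2 * b ^ 2 + (a ^ 2 - b ^ 2) * (a * Real.sin θ) ^ 2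
        - (a * Real.sin θ) ^ 4
        = (a * Real.cos θ) ^ 2 * (b ^ 2 + a ^ 2 * Real.sin θ ^ 2) := by
      linear_combination (-(a ^ 2 * b ^ 2) - a ^ 4 * Real.sin θ ^ 2) *
        Real.sin_sq_add_cos_sq θ
    have hDpos : (0:ℝ) < b ^ 2 + a ^ 2 * Real.sin θ ^ 2 := by positivity
    have hsq : Real.sqrt ((a * Real.cos θ) ^ 2 * (b ^ 2 + a ^ 2 * Real.sin θ ^ 2))
        = (a * Real.cos θ) * Real.sqrt (b ^ 2 + a ^ 2 * Real.sin θ ^ 2) := by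
      rw [Real.sqrt_mul (sq_nonneg _), Real.sqrt_sq (by positivity)]
    have hsqrtpos : 0 < Real.sqrt (b ^ 2 + a ^ 2 * Real.sin θ ^ 2) :=
      Real.sqrt_pos.mpr hDpos
    simp only [f, g, smul_eq_mul, hrad, hsq]
    rw [abs_of_pos (by positivity : (0:ℝ) < a * Real.cos θ)]
    field_simp
  -- Step 2: reflection θ ↦ π/2 - θ
  have step2 : (∫ θ in (0:ℝ)..(π / 2), g θ)
      = ∫ θ in (0:ℝ)..(π / 2), g (π / 2 - θ) := by
    rw [intervalIntegral.integral_comp_sub_left g (π / 2)]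
    norm_num
  -- Step 3: pointwise identity with elliptic integrands
  have step3 : ∀ θ : ℝ, g (π / 2 - θ)
      = c * Real.sqrt (1 - k ^ 2 * Real.sin θ ^ 2)
        - b ^ 2 / c * (1 / Real.sqrt (1 - k ^ 2 * Real.sin θ ^ 2)) := by
    intro θ
    have hS := hSpos θ
    have hsqS : 0 < Real.sqrt (1 - k ^ 2 * Real.sin θ ^ 2) := Real.sqrt_pos.mpr hS
    have hsqS2 : Real.sqrt (1 - k ^ 2 * Real.sin θ ^ 2) ^ 2
        = 1 - k ^ 2 * Real.sin θ ^ 2 := Real.sq_sqrt hS.le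
    have hcosθ : Real.sin (π / 2 - θ) = Real.cos θ := Real.sin_pi_div_two_sub θ
    have hnum : a ^ 2 * Real.cos θ ^ 2
        = c ^ 2 * (1 - k ^ 2 * Real.sin θ ^ 2) - b ^ 2 := by
      linear_combination hD θ
    have hden : Real.sqrt (b ^ 2 + a ^ 2 * Real.cos θ ^ 2)
        = c * Real.sqrt (1 - k ^ 2 * Real.sin θ ^ 2) := by
      rw [hD θ, Real.sqrt_mul (sq_nonneg c), Real.sqrt_sq hc.le]
    simp only [g, hcosθ, hden, hnum]
    set x := Real.sqrt (1 - k ^ 2 * Real.sin θ ^ 2) with hx_def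
    rw [show c ^ 2 * (1 - k ^ 2 * Real.sin θ ^ 2) - b ^ 2 = c ^ 2 * x ^ 2 - b ^ 2
      from by rw [hsqS2]]
    field_simp
    rw [show √(b ^ 2 + (c ^ 2 * x ^ 2 - b ^ 2)) = c * x by
      rw [show b ^ 2 + (c ^ 2 * x ^ 2 - b ^ 2) = (c * x) ^ 2 by ring,
        Real.sqrt_sq (mul_pos hc hsqS).le]]
    ring
  -- integrability of the two elliptic pieces
  have hcontS : Continuous fun θ : ℝ => Real.sqrt (1 - k ^ 2 * Real.sin θ ^ 2) :=
    (continuous_const.sub (continuous_const.mul (Real.continuous_sin.pow 2))).sqrt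
  have hi1 : IntervalIntegrable
      (fun θ : ℝ => c * Real.sqrt (1 - k ^ 2 * Real.sin θ ^ 2))
      MeasureTheory.volume 0 (π / 2) :=
    (continuous_const.mul hcontS).intervalIntegrable _ _
  have hi2 : IntervalIntegrable
      (fun θ : ℝ => b ^ 2 / c * (1 / Real.sqrt (1 - k ^ 2 * Real.sin θ ^ 2)))
      MeasureTheory.volume 0 (π / 2) := by
    apply Continuous.intervalIntegrable
    apply continuous_const.mul
    exact continuous_const.div hcontS
      (fun θ => (Real.sqrt_pos.mpr (hSpos θ)).ne')
  rw [step1, step2]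
  calc (∫ θ in (0:ℝ)..(π / 2), g (π / 2 - θ))
      = ∫ θ in (0:ℝ)..(π / 2),
          (c * Real.sqrt (1 - k ^ 2 * Real.sin θ ^ 2)
            - b ^ 2 / c * (1 / Real.sqrt (1 - k ^ 2 * Real.sin θ ^ 2))) := by
        apply intervalIntegral.integral_congr
        intro θ _
        exact step3 θ
    _ = c * ellipticE k - b ^ 2 / c * ellipticK k := by
        rw [intervalIntegral.integral_sub hi1 hi2,
          intervalIntegral.integral_const_mul, intervalIntegral.integral_const_mul]
        rfl
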